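/- arXiv:2302.12996 — 2 statements merged into one kernel-verified Lean document; each statement's English description precedes it below -/
import Mathlib

section
/- Let λ, μ > 0, ω > 0, k_p = ω/√(λ+2μ), k_s = ω/√μ. Then there exists a constant C > 0 depending only on λ and μ such that for all ξ with |ξ| ≤ k_p, setting γ_p = √(k_p² − ξ²), γ_s = √(k_s² − ξ²), ρ = ξ² + γ_p γ_s, one has ω² γ_p / ρ ≤ C ω, ω² γ_s / ρ ≤ C ω, and |ξ ω² − ξ μ ρ|/ρ ≤ C ω. -/
noncomputable def kp (lam mu om : ℝ) : ℝ := om / Real.sqrt (lam + 2 * mu)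
noncomputable def ks (mu om : ℝ) : ℝ := om / Real.sqrt mu

set_option maxHeartbeats 1000000 in
private lemma aux (lam mu s t om ξ a b gp gs : ℝ)
    (hlam : 0 < lam) (hmu : 0 < mu)
    (hs : 0 < s) (ht : 0 < t) (hs2 : s ^ 2 = lam + 2 * mu) (ht2 : t ^ 2 = mu)
    (hom : 0 < om) (ha : a * s = om) (hb : b * t = om)
    (hξ : |ξ| ≤ a) (hgp0 : 0 ≤ gp) (hgs0 : 0 ≤ gs)
    (hgp_le : gp ≤ a) (hgs_le : gs ≤ b) (hρa0 : a ^ 2 ≤ ξ ^ 2 + gp * gs) :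
    om ^ 2 * gp / (ξ ^ 2 + gp * gs) ≤ (s + (lam + 2 * mu) / t + mu / s) * om ∧
    om ^ 2 * gs / (ξ ^ 2 + gp * gs) ≤ (s + (lam + 2 * mu) / t + mu / s) * om ∧
    |ξ * om ^ 2 - ξ * mu * (ξ ^ 2 + gp * gs)| / (ξ ^ 2 + gp * gs) ≤
      (s + (lam + 2 * mu) / t + mu / s) * om := by
  have hapos : 0 < a := by
    have := abs_nonneg ξ; nlinarith
  have hbpos : 0 < b := by nlinarith
  obtain ⟨ρ, hρdef⟩ : ∃ ρ, ξ ^ 2 + gp * gs = ρ := ⟨_, rfl⟩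
  rw [hρdef]
  have hρa : a ^ 2 ≤ ρ := by rw [← hρdef]; exact hρa0
  have hρ : 0 < ρ := lt_of_lt_of_le (by positivity) hρa
  have hsom : s * om * a ^ 2 = a * om ^ 2 := by linear_combination a * om * ha
  have hmus : mu / s * om = mu * a := by
    rw [← ha]; field_simp
  have hlmt : (lam + 2 * mu) / t * om * a ^ 2 = b * om ^ 2 := by
    rw [div_mul_eq_mul_div, div_mul_eq_mul_div, div_eq_iff ht.ne']
    linear_combination (-(om * a ^ 2)) * hs2 + om * (a * s + om) * ha - om ^ 2 * hb
  have hexp : (s + (lam + 2 * mu) / t + mu / s) * om * ρ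
      = s * om * ρ + (lam + 2 * mu) / t * om * ρ + mu / s * om * ρ := by ring
  have hA : 0 ≤ (lam + 2 * mu) / t * om * ρ := by positivity
  have hB : 0 ≤ mu / s * om * ρ := by positivity
  have hS : 0 ≤ s * om * ρ := by positivity
  have h1 : s * om * a ^ 2 ≤ s * om * ρ := by
    apply mul_le_mul_of_nonneg_left hρa; positivity
  have h1' : (lam + 2 * mu) / t * om * a ^ 2 ≤ (lam + 2 * mu) / t * om * ρ := by
    apply mul_le_mul_of_nonneg_left hρa; positivity
  refine ⟨?_, ?_, ?_⟩
  · rw [div_le_iff₀ hρ]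
    have h2 : om ^ 2 * gp ≤ om ^ 2 * a := mul_le_mul_of_nonneg_left hgp_le (sq_nonneg om)
    linarith [hsom]
  · rw [div_le_iff₀ hρ]
    have h2 : om ^ 2 * gs ≤ om ^ 2 * b := mul_le_mul_of_nonneg_left hgs_le (sq_nonneg om)
    linarith [hlmt]
  · rw [div_le_iff₀ hρ]
    have hξa : ξ ≤ a := (le_abs_self ξ).trans hξ
    have hξa' : -a ≤ ξ := by have := neg_abs_le ξ; linarith
    have hmuρ : 0 ≤ mu * ρ := mul_nonneg hmu.le hρ.le
    have habs : |ξ * om ^ 2 - ξ * mu * ρ| ≤ a * om ^ 2 + a * mu * ρ := by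
      rw [abs_sub_le_iff]
      constructor
      · have k1 : ξ * om ^ 2 ≤ a * om ^ 2 := mul_le_mul_of_nonneg_right hξa (sq_nonneg om)
        have k2 : -a * (mu * ρ) ≤ ξ * (mu * ρ) := mul_le_mul_of_nonneg_right hξa' hmuρ
        nlinarith
      · have k1 : -a * om ^ 2 ≤ ξ * om ^ 2 := mul_le_mul_of_nonneg_right hξa' (sq_nonneg om)
        have k2 : ξ * (mu * ρ) ≤ a * (mu * ρ) := mul_le_mul_of_nonneg_right hξa hmuρ
        nlinarith
    have hmus' : mu / s * om * ρ = mu * a * ρ := by rw [hmus]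
    have hcom : mu * a * ρ = a * mu * ρ := by ring
    linarith [hsom, habs]

/-- Entry bounds (3.1)–(3.3) for the DtN symbol in the regime `|ξ| ≤ k_p`:
there is `C > 0` depending only on `λ, μ` such that
`ω²γ_p/ρ ≤ Cω`, `ω²γ_s/ρ ≤ Cω` and `|ξω² − ξμρ|/ρ ≤ Cω`. -/
theorem stmt1 (lam mu : ℝ) (hlam : 0 < lam) (hmu : 0 < mu) :
    ∃ C > (0 : ℝ), ∀ om > (0 : ℝ), ∀ ξ : ℝ, |ξ| ≤ kp lam mu om →
      om ^ 2 * Real.sqrt ((kp lam mu om) ^ 2 - ξ ^ 2) /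
          (ξ ^ 2 + Real.sqrt ((kp lam mu om) ^ 2 - ξ ^ 2) *
            Real.sqrt ((ks mu om) ^ 2 - ξ ^ 2)) ≤ C * om ∧
      om ^ 2 * Real.sqrt ((ks mu om) ^ 2 - ξ ^ 2) /
          (ξ ^ 2 + Real.sqrt ((kp lam mu om) ^ 2 - ξ ^ 2) *
            Real.sqrt ((ks mu om) ^ 2 - ξ ^ 2)) ≤ C * om ∧
      |ξ * om ^ 2 - ξ * mu * (ξ ^ 2 + Real.sqrt ((kp lam mu om) ^ 2 - ξ ^ 2) *
            Real.sqrt ((ks mu om) ^ 2 - ξ ^ 2))| /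
          (ξ ^ 2 + Real.sqrt ((kp lam mu om) ^ 2 - ξ ^ 2) *
            Real.sqrt ((ks mu om) ^ 2 - ξ ^ 2)) ≤ C * om := by
  have hlm : (0:ℝ) < lam + 2 * mu := by linarith
  have hs : 0 < Real.sqrt (lam + 2 * mu) := Real.sqrt_pos.mpr hlm
  have ht : 0 < Real.sqrt mu := Real.sqrt_pos.mpr hmu
  have hs2 : Real.sqrt (lam + 2 * mu) ^ 2 = lam + 2 * mu := Real.sq_sqrt hlm.le
  have ht2 : Real.sqrt mu ^ 2 = mu := Real.sq_sqrt hmu.le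
  refine ⟨Real.sqrt (lam + 2 * mu) + (lam + 2 * mu) / Real.sqrt mu + mu / Real.sqrt (lam + 2 * mu),
    by positivity, ?_⟩
  intro om hom ξ hξ
  have ha : 0 < kp lam mu om := div_pos hom hs
  have hb : 0 < ks mu om := div_pos hom ht
  have hab : kp lam mu om ≤ ks mu om := by
    exact div_le_div_of_nonneg_left hom.le ht (Real.sqrt_le_sqrt (by linarith))
  have hξ2 : ξ ^ 2 ≤ (kp lam mu om) ^ 2 := by
    have := pow_le_pow_left₀ (abs_nonneg ξ) hξ 2
    rwa [sq_abs] at this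
  have hξb2 : ξ ^ 2 ≤ (ks mu om) ^ 2 := hξ2.trans (by nlinarith)
  have hgp_sq : Real.sqrt ((kp lam mu om) ^ 2 - ξ ^ 2) ^ 2 = (kp lam mu om) ^ 2 - ξ ^ 2 :=
    Real.sq_sqrt (by linarith)
  have hgp_le : Real.sqrt ((kp lam mu om) ^ 2 - ξ ^ 2) ≤ kp lam mu om := by
    calc Real.sqrt ((kp lam mu om) ^ 2 - ξ ^ 2) ≤ Real.sqrt ((kp lam mu om) ^ 2) :=
          Real.sqrt_le_sqrt (by nlinarith [sq_nonneg ξ])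
    _ = kp lam mu om := Real.sqrt_sq ha.le
  have hgs_le : Real.sqrt ((ks mu om) ^ 2 - ξ ^ 2) ≤ ks mu om := by
    calc Real.sqrt ((ks mu om) ^ 2 - ξ ^ 2) ≤ Real.sqrt ((ks mu om) ^ 2) :=
          Real.sqrt_le_sqrt (by nlinarith [sq_nonneg ξ])
    _ = ks mu om := Real.sqrt_sq hb.le
  have hgpgs : Real.sqrt ((kp lam mu om) ^ 2 - ξ ^ 2) ≤ Real.sqrt ((ks mu om) ^ 2 - ξ ^ 2) :=
    Real.sqrt_le_sqrt (by nlinarith)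
  have hρa : (kp lam mu om) ^ 2 ≤ ξ ^ 2 + Real.sqrt ((kp lam mu om) ^ 2 - ξ ^ 2) *
      Real.sqrt ((ks mu om) ^ 2 - ξ ^ 2) := by
    nlinarith [Real.sqrt_nonneg ((kp lam mu om) ^ 2 - ξ ^ 2), hgp_sq, hgpgs]
  exact aux lam mu _ _ om ξ (kp lam mu om) (ks mu om) _ _ hlam hmu hs ht hs2 ht2 hom
    (by rw [kp]; field_simp) (by rw [ks]; field_simp)
    hξ (Real.sqrt_nonneg _) (Real.sqrt_nonneg _) hgp_le hgs_le hρa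
end

section
/- Let λ, μ > 0, ω > 0, k_p = ω/√(λ+2μ), k_s = ω/√μ. For k_p < |ξ| ≤ k_s, with γ_p = i√(ξ² − k_p²) purely imaginary, γ_s = √(k_s² − ξ²) real, and ρ = ξ² + γ_p γ_s, one has k_p² < |ρ| ≤ k_s². -/
/-- For `k_p < |ξ| ≤ k_s`, with `γ_p = i√(ξ² − k_p²)` purely imaginary,
`γ_s = √(k_s² − ξ²)` real, and `ρ = ξ² + γ_p γ_s`, one has `k_p² < |ρ| ≤ k_s²`. -/
theorem stmt2 (lam mu om ξ : ℝ) (hlam : 0 < lam) (hmu : 0 < mu) (hom : 0 < om)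
    (hlo : kp lam mu om < |ξ|) (hhi : |ξ| ≤ ks mu om) :
    (kp lam mu om) ^ 2 <
        ‖((ξ ^ 2 : ℂ) +
          (Complex.I * (Real.sqrt (ξ ^ 2 - (kp lam mu om) ^ 2) : ℝ)) *
            ((Real.sqrt ((ks mu om) ^ 2 - ξ ^ 2) : ℝ) : ℂ))‖ ∧
      ‖((ξ ^ 2 : ℂ) +
          (Complex.I * (Real.sqrt (ξ ^ 2 - (kp lam mu om) ^ 2) : ℝ)) *
            ((Real.sqrt ((ks mu om) ^ 2 - ξ ^ 2) : ℝ) : ℂ))‖ ≤ (ks mu om) ^ 2 := by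
  set p := kp lam mu om with hpdef
  set s := ks mu om with hsdef
  have hp : 0 < p := by
    have : 0 < Real.sqrt (lam + 2 * mu) := Real.sqrt_pos.mpr (by linarith)
    exact div_pos hom this
  have hp2 : p ^ 2 < ξ ^ 2 := by
    have h0 : (0:ℝ) ≤ p := hp.le
    calc p ^ 2 < |ξ| ^ 2 := by nlinarith
    _ = ξ ^ 2 := sq_abs ξ
  have hs2 : ξ ^ 2 ≤ s ^ 2 := by
    calc ξ ^ 2 = |ξ| ^ 2 := (sq_abs ξ).symm
    _ ≤ s ^ 2 := by nlinarith [abs_nonneg ξ]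
  set a := Real.sqrt (ξ ^ 2 - p ^ 2) with hadef
  set b := Real.sqrt (s ^ 2 - ξ ^ 2) with hbdef
  have ha2 : a ^ 2 = ξ ^ 2 - p ^ 2 := Real.sq_sqrt (by linarith)
  have hb2 : b ^ 2 = s ^ 2 - ξ ^ 2 := Real.sq_sqrt (by linarith)
  have hz : ((ξ ^ 2 : ℂ) + (Complex.I * (a:ℂ)) * (b:ℂ))
      = (↑(ξ ^ 2) + ↑(a * b) * Complex.I) := by
    push_cast; ring
  rw [hz, Complex.norm_add_mul_I]
  have hab : (a * b) ^ 2 = (ξ ^ 2 - p ^ 2) * (s ^ 2 - ξ ^ 2) := by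
    rw [mul_pow, ha2, hb2]
  constructor
  · rw [show p ^ 2 = Real.sqrt ((p ^ 2) ^ 2) from (Real.sqrt_sq (sq_nonneg p)).symm]
    apply Real.sqrt_lt_sqrt (sq_nonneg _)
    nlinarith [sq_nonneg p, sq_nonneg ξ]
  · rw [show s ^ 2 = Real.sqrt ((s ^ 2) ^ 2) from (Real.sqrt_sq (sq_nonneg s)).symm]
    apply Real.sqrt_le_sqrt
    nlinarith [sq_nonneg p, sq_nonneg ξ]
end
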